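/- arXiv:2010.05000 — 3 statements merged into one kernel-verified Lean document; each statement's English description precedes it below -/
import Mathlib

section
/- For n ≥ 3, the commuting graph Δ(B_n) is not Eulerian, i.e., it has a vertex of odd degree. -/
/-- Multiplication of nonzero elements of the Brandt semigroup `B_n`:
`(i,j)·(k,l) = (i,l)` if `j = k`, and `0` (here `none`) otherwise. -/
def brandtMul {n : ℕ} (x y : Fin n × Fin n) : Option (Fin n × Fin n) :=
  if x.2 = y.1 then some (x.1, y.2) else none

/-- The commuting graph of the Brandt semigroup `B_n`. -/
def brandtGraph (n : ℕ) : SimpleGraph (Fin n × Fin n) where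
  Adj x y := x ≠ y ∧ brandtMul x y = brandtMul y x
  symm := ⟨by intro x y h; exact ⟨h.1.symm, h.2.symm⟩⟩
  loopless := ⟨by intro x h; exact h.1 rfl⟩

instance {n : ℕ} : DecidableRel (brandtGraph n).Adj :=
  fun x y => decidable_of_iff (x ≠ y ∧ brandtMul x y = brandtMul y x) Iff.rfl

lemma brandt_adj_iff {n : ℕ} (x y : Fin n × Fin n) :
    (brandtGraph n).Adj x y ↔ x ≠ y ∧ x.2 ≠ y.1 ∧ y.2 ≠ x.1 := by
  constructor
  · rintro ⟨hne, hmul⟩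
    refine ⟨hne, ?_, ?_⟩
    · intro h
      unfold brandtMul at hmul
      rw [if_pos h] at hmul
      split_ifs at hmul with h2
      · simp only [Option.some.injEq, Prod.mk.injEq] at hmul
        exact hne (Prod.ext hmul.1 hmul.2.symm)
    · intro h
      unfold brandtMul at hmul
      rw [if_pos h] at hmul
      split_ifs at hmul with h1
      · simp only [Option.some.injEq, Prod.mk.injEq] at hmul
        exact hne (Prod.ext hmul.1 hmul.2.symm)
  · rintro ⟨hne, h1, h2⟩
    exact ⟨hne, by unfold brandtMul; rw [if_neg h1, if_neg h2]⟩

lemma brandt_nbhd {n : ℕ} (v : Fin n × Fin n) :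
    (brandtGraph n).neighborFinset v =
      ((Finset.univ.erase v.2) ×ˢ (Finset.univ.erase v.1)).erase v := by
  ext y
  simp only [SimpleGraph.mem_neighborFinset, brandt_adj_iff, Finset.mem_erase,
    Finset.mem_product, Finset.mem_univ, and_true]
  constructor <;> rintro ⟨a, b, c⟩ <;> exact ⟨a.symm, b.symm, c⟩

theorem brandt_not_eulerian (n : ℕ) (hn : 3 ≤ n) :
    ∃ v : Fin n × Fin n, Odd ((brandtGraph n).degree v) := by
  have hn0 : 0 < n := by omega
  have card_erase : ∀ a : Fin n, (Finset.univ.erase a).card = n - 1 := by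
    intro a
    rw [Finset.card_erase_of_mem (Finset.mem_univ a), Finset.card_univ, Fintype.card_fin]
  rcases Nat.even_or_odd n with he | ho
  · -- n even: take v = (0,0), degree = (n-1)^2, odd
    refine ⟨(⟨0, hn0⟩, ⟨0, hn0⟩), ?_⟩
    rw [SimpleGraph.degree, brandt_nbhd]
    have hv : (⟨0, hn0⟩, ⟨0, hn0⟩) ∉
        (Finset.univ.erase (⟨0, hn0⟩ : Fin n)) ×ˢ (Finset.univ.erase (⟨0, hn0⟩ : Fin n)) := by
      simp
    rw [Finset.erase_eq_of_notMem hv, Finset.card_product, card_erase]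
    have : Odd (n - 1) := Nat.Even.sub_odd (by omega) he odd_one
    exact this.mul this
  · -- n odd: take v = (0,1), degree = (n-1)^2 - 1, odd
    have h1n : 1 < n := by omega
    refine ⟨(⟨0, hn0⟩, ⟨1, h1n⟩), ?_⟩
    rw [SimpleGraph.degree, brandt_nbhd]
    have hv : ((⟨0, hn0⟩ : Fin n), (⟨1, h1n⟩ : Fin n)) ∈
        (Finset.univ.erase (⟨1, h1n⟩ : Fin n)) ×ˢ (Finset.univ.erase (⟨0, hn0⟩ : Fin n)) := by
      simp [Fin.ext_iff]
    rw [Finset.card_erase_of_mem hv, Finset.card_product, card_erase, card_erase]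
    have heven : Even ((n - 1) * (n - 1)) := by
      have : Even (n - 1) := Nat.Odd.sub_odd ho odd_one
      exact this.mul_right _
    have hge : 1 ≤ (n - 1) * (n - 1) := Nat.one_le_iff_ne_zero.mpr (by
      have : 2 ≤ n - 1 := by omega
      positivity)
    exact Nat.Even.sub_odd hge heven odd_one
end

section
/- For n ≥ 2, the independence number of the commuting graph Δ(B_n) is 3: the set {(1,1), (1,2), (2,1)} is an independent set, and every independent set has at most 3 vertices. -/
/-- If two distinct elements are non-adjacent (don't commute), then
    `x.2 = y.1` or `y.2 = x.1`. -/
lemma nonadj_cond {n : ℕ} {x y : Fin n × Fin n} (hxy : x ≠ y)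
    (h : ¬ (brandtGraph n).Adj x y) : x.2 = y.1 ∨ y.2 = x.1 := by
  by_contra hc
  push_neg at hc
  exact h ⟨hxy, by simp [brandtMul, hc.1, hc.2]⟩

/-- No four elements can be pairwise non-commuting. -/
lemma key4 {n : ℕ} {a b c d : Fin n × Fin n}
    (hab : a ≠ b) (hac : a ≠ c) (had : a ≠ d) (hbc : b ≠ c) (hbd : b ≠ d) (hcd : c ≠ d)
    (pab : a.2 = b.1 ∨ b.2 = a.1) (pac : a.2 = c.1 ∨ c.2 = a.1)
    (pad : a.2 = d.1 ∨ d.2 = a.1) (pbc : b.2 = c.1 ∨ c.2 = b.1)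
    (pbd : b.2 = d.1 ∨ d.2 = b.1) (pcd : c.2 = d.1 ∨ d.2 = c.1) : False := by
  obtain ⟨a1, a2⟩ := a
  obtain ⟨b1, b2⟩ := b
  obtain ⟨c1, c2⟩ := c
  obtain ⟨d1, d2⟩ := d
  simp only [Prod.mk.injEq, not_and, Fin.ext_iff, ne_eq] at hab hac had hbc hbd hcd pab pac pad pbc pbd pcd
  omega

theorem brandt_indep_number (n : ℕ) (hn : 2 ≤ n) :
    ({(⟨⟨0, by omega⟩, ⟨0, by omega⟩⟩ : Fin n × Fin n), ⟨⟨0, by omega⟩, ⟨1, by omega⟩⟩,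
        ⟨⟨1, by omega⟩, ⟨0, by omega⟩⟩} : Set (Fin n × Fin n)).Pairwise
      (fun x y => ¬ (brandtGraph n).Adj x y) ∧
    ∀ s : Set (Fin n × Fin n),
      s.Pairwise (fun x y => ¬ (brandtGraph n).Adj x y) → s.ncard ≤ 3 := by
  constructor
  · intro x hx y hy hxy
    simp only [Set.mem_insert_iff, Set.mem_singleton_iff] at hx hy
    rcases hx with rfl | rfl | rfl <;> rcases hy with rfl | rfl | rfl <;>
      simp_all [brandtGraph, brandtMul, Prod.ext_iff, Fin.ext_iff]
  · intro s hs
    by_contra h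
    push_neg at h
    obtain ⟨t, hts, ht⟩ := Set.exists_subset_card_eq (show 4 ≤ s.ncard by omega)
    have htfin : t.Finite := Set.toFinite t
    have htne : t.Nonempty := by
      rw [← Set.ncard_pos htfin]; omega
    obtain ⟨a, ha⟩ := htne
    have h3 : (t \ {a}).ncard = 3 := by
      rw [Set.ncard_diff_singleton_of_mem ha, ht]
    rw [Set.ncard_eq_three] at h3
    obtain ⟨x, y, z, hxy, hxz, hyz, hset⟩ := h3
    have hxm : x ∈ t \ {a} := by rw [hset]; simp
    have hym : y ∈ t \ {a} := by rw [hset]; simp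
    have hzm : z ∈ t \ {a} := by rw [hset]; simp
    have hax : a ≠ x := fun e => hxm.2 (by simp [← e])
    have hay : a ≠ y := fun e => hym.2 (by simp [← e])
    have haz : a ≠ z := fun e => hzm.2 (by simp [← e])
    have has : a ∈ s := hts ha
    have hxs : x ∈ s := hts hxm.1
    have hys : y ∈ s := hts hym.1
    have hzs : z ∈ s := hts hzm.1
    exact key4 hax hay haz hxy hxz hyz
      (nonadj_cond hax (hs has hxs hax))
      (nonadj_cond hay (hs has hys hay))
      (nonadj_cond haz (hs has hzs haz))
      (nonadj_cond hxy (hs hxs hys hxy))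
      (nonadj_cond hxz (hs hxs hzs hxz))
      (nonadj_cond hyz (hs hys hzs hyz))
end

section
/- For n ≥ 3, the vertex connectivity of the commuting graph Δ(B_n) is n(n−2); in particular, between any two distinct vertices there exist at least n(n−2) internally disjoint paths. -/
lemma ncard_fst_eq {n : ℕ} (q : Fin n) : {x : Fin n × Fin n | x.1 = q}.ncard ≤ n := by
  have := Set.ncard_le_ncard_of_injOn (s := {x : Fin n × Fin n | x.1 = q})
    (t := (Set.univ : Set (Fin n))) Prod.snd
    (fun a _ => trivial)
    (fun a ha b hb hab => Prod.ext (ha.trans hb.symm) hab)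
    (Set.toFinite _)
  simpa [Set.ncard_univ] using this

lemma ncard_snd_eq {n : ℕ} (q : Fin n) : {x : Fin n × Fin n | x.2 = q}.ncard ≤ n := by
  have := Set.ncard_le_ncard_of_injOn (s := {x : Fin n × Fin n | x.2 = q})
    (t := (Set.univ : Set (Fin n))) Prod.fst
    (fun a _ => trivial)
    (fun a ha b hb hab => Prod.ext hab (ha.trans hb.symm))
    (Set.toFinite _)
  simpa [Set.ncard_univ] using this

lemma cross_bound {n : ℕ} (a b : Fin n) :
    {x : Fin n × Fin n | x.2 = a ∨ x.1 = b}.ncard + 1 ≤ 2 * n := by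
  have hu : {x : Fin n × Fin n | x.2 = a ∨ x.1 = b} =
      {x : Fin n × Fin n | x.2 = a} ∪ {x : Fin n × Fin n | x.1 = b} := by
    ext x; simp [Set.mem_union, Set.mem_setOf_eq]
  have h := Set.ncard_union_add_ncard_inter {x : Fin n × Fin n | x.2 = a}
      {x : Fin n × Fin n | x.1 = b} (Set.toFinite _) (Set.toFinite _)
  have hint : 0 < ({x : Fin n × Fin n | x.2 = a} ∩ {x : Fin n × Fin n | x.1 = b}).ncard := by
    rw [Set.ncard_pos (Set.toFinite _)]
    exact ⟨(b, a), by simp [Set.mem_inter_iff, Set.mem_setOf_eq]⟩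
  have h1 := ncard_snd_eq (n := n) a
  have h2 := ncard_fst_eq (n := n) b
  rw [hu]
  omega

lemma pair_ncard_le {α : Type*} (a b : α) : ({a, b} : Set α).ncard ≤ 2 := by
  have h := Set.ncard_insert_le a ({b} : Set α)
  simpa [Set.ncard_singleton] using h

lemma aligned {n : ℕ} (B : Set (Fin n × Fin n)) (y₀ : Fin n × Fin n) (hy₀ : y₀ ∈ B)
    (h : ∀ y ∈ B, ∀ y' ∈ B, y.1 = y'.1 ∨ y.2 = y'.2) :
    (∃ p, ∀ y ∈ B, y.1 = p) ∨ (∃ q, ∀ y ∈ B, y.2 = q) := by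
  by_cases hx : ∃ y ∈ B, ∃ y' ∈ B, y.1 ≠ y'.1
  · obtain ⟨y, hy, y', hy', hne⟩ := hx
    have hq : y.2 = y'.2 := (h y hy y' hy').resolve_left hne
    refine Or.inr ⟨y.2, fun z hz => ?_⟩
    by_contra hzq
    have h1 : z.1 = y.1 := (h z hz y hy).resolve_right hzq
    have h2 : z.1 = y'.1 := (h z hz y' hy').resolve_right (by rw [← hq]; exact hzq)
    exact hne (h1.symm.trans h2)
  · push_neg at hx
    exact Or.inl ⟨y₀.1, fun y hy => hx y hy y₀ hy₀⟩

lemma aligned_ncard {n : ℕ} (B : Set (Fin n × Fin n))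
    (h : (∃ p, ∀ y ∈ B, y.1 = p) ∨ (∃ q, ∀ y ∈ B, y.2 = q)) : B.ncard ≤ n := by
  rcases h with ⟨p, hp⟩ | ⟨q, hq⟩
  · exact le_trans (Set.ncard_le_ncard (fun y hy => hp y hy) (Set.toFinite _)) (ncard_fst_eq p)
  · exact le_trans (Set.ncard_le_ncard (fun y hy => hq y hy) (Set.toFinite _)) (ncard_snd_eq q)

lemma half {n : ℕ} (hn : 3 ≤ n) (A B : Set (Fin n × Fin n))
    (hP : ∀ x ∈ A, ∀ y ∈ B, x.2 = y.1 ∨ y.2 = x.1)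
    (hBne : B.Nonempty)
    (x x' : Fin n × Fin n) (hx : x ∈ A) (hx' : x' ∈ A)
    (h1 : x.1 ≠ x'.1) (h2 : x.2 ≠ x'.2) :
    A.ncard + B.ncard ≤ 2 * n := by
  have hBsub : B ⊆ {(x.2, x'.1), (x'.2, x.1)} := by
    intro y hy
    rcases hP x hx y hy with e1 | e1 <;> rcases hP x' hx' y hy with e2 | e2
    · exact absurd (e1.trans e2.symm) h2
    · exact Or.inl (Prod.ext e1.symm e2)
    · exact Or.inr (Prod.ext e2.symm e1)
    · exact absurd (e1.symm.trans e2) h1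
  have hB2 : B.ncard ≤ 2 :=
    le_trans (Set.ncard_le_ncard hBsub (Set.toFinite _)) (pair_ncard_le _ _)
  by_cases hBu : ∃ y ∈ B, ∃ y' ∈ B, y.1 ≠ y'.1 ∧ y.2 ≠ y'.2
  · obtain ⟨y, hy, y', hy', e1, e2⟩ := hBu
    have hAsub : A ⊆ {(y'.2, y.1), (y.2, y'.1)} := by
      intro z hz
      rcases hP z hz y hy with f1 | f1 <;> rcases hP z hz y' hy' with f2 | f2
      · exact absurd (f1.symm.trans f2) e1
      · exact Or.inl (Prod.ext f2.symm f1)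
      · exact Or.inr (Prod.ext f1.symm f2)
      · exact absurd (f1.trans f2.symm) e2
    have hA2 : A.ncard ≤ 2 :=
      le_trans (Set.ncard_le_ncard hAsub (Set.toFinite _)) (pair_ncard_le _ _)
    omega
  · push_neg at hBu
    obtain ⟨y₀, hy₀⟩ := hBne
    rcases aligned B y₀ hy₀
        (fun y hy y' hy' => or_iff_not_imp_left.mpr (hBu y hy y' hy')) with ⟨p, hp⟩ | ⟨q, hq⟩
    · by_cases hvar : ∃ y ∈ B, ∃ y' ∈ B, y.2 ≠ y'.2
      · obtain ⟨y, hy, y', hy', e⟩ := hvar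
        have hAsub : A ⊆ {z : Fin n × Fin n | z.2 = p} := by
          intro z hz
          rcases hP z hz y hy with f1 | f1
          · exact f1.trans (hp y hy)
          · rcases hP z hz y' hy' with f2 | f2
            · exact f2.trans (hp y' hy')
            · exact absurd (f1.trans f2.symm) e
        have hAn : A.ncard ≤ n :=
          le_trans (Set.ncard_le_ncard hAsub (Set.toFinite _)) (ncard_snd_eq p)
        omega
      · push_neg at hvar
        have hBsingle : B ⊆ {y₀} := fun y hy =>
          Prod.ext ((hp y hy).trans (hp y₀ hy₀).symm) (hvar y hy y₀ hy₀)
        have hB1 : B.ncard ≤ 1 :=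
          le_trans (Set.ncard_le_ncard hBsingle (Set.toFinite _)) (le_of_eq (Set.ncard_singleton y₀))
        have hAcross : A ⊆ {z : Fin n × Fin n | z.2 = y₀.1 ∨ z.1 = y₀.2} := by
          intro z hz
          rcases hP z hz y₀ hy₀ with f | f
          · exact Or.inl f
          · exact Or.inr f.symm
        have hcb := cross_bound (n := n) y₀.1 y₀.2
        have hA : A.ncard ≤ {z : Fin n × Fin n | z.2 = y₀.1 ∨ z.1 = y₀.2}.ncard :=
          Set.ncard_le_ncard hAcross (Set.toFinite _)
        omega
    · by_cases hvar : ∃ y ∈ B, ∃ y' ∈ B, y.1 ≠ y'.1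
      · obtain ⟨y, hy, y', hy', e⟩ := hvar
        have hAsub : A ⊆ {z : Fin n × Fin n | z.1 = q} := by
          intro z hz
          rcases hP z hz y hy with f1 | f1
          · rcases hP z hz y' hy' with f2 | f2
            · exact absurd (f1.symm.trans f2) e
            · exact f2.symm.trans (hq y' hy')
          · exact f1.symm.trans (hq y hy)
        have hAn : A.ncard ≤ n :=
          le_trans (Set.ncard_le_ncard hAsub (Set.toFinite _)) (ncard_fst_eq q)
        omega
      · push_neg at hvar
        have hBsingle : B ⊆ {y₀} := fun y hy =>
          Prod.ext (hvar y hy y₀ hy₀) ((hq y hy).trans (hq y₀ hy₀).symm)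
        have hB1 : B.ncard ≤ 1 :=
          le_trans (Set.ncard_le_ncard hBsingle (Set.toFinite _)) (le_of_eq (Set.ncard_singleton y₀))
        have hAcross : A ⊆ {z : Fin n × Fin n | z.2 = y₀.1 ∨ z.1 = y₀.2} := by
          intro z hz
          rcases hP z hz y₀ hy₀ with f | f
          · exact Or.inl f
          · exact Or.inr f.symm
        have hcb := cross_bound (n := n) y₀.1 y₀.2
        have hA : A.ncard ≤ {z : Fin n × Fin n | z.2 = y₀.1 ∨ z.1 = y₀.2}.ncard :=
          Set.ncard_le_ncard hAcross (Set.toFinite _)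
        omega

lemma key {n : ℕ} (hn : 3 ≤ n) (A B : Set (Fin n × Fin n))
    (hA : A.Nonempty) (hB : B.Nonempty)
    (hP : ∀ x ∈ A, ∀ y ∈ B, x.2 = y.1 ∨ y.2 = x.1) :
    A.ncard + B.ncard ≤ 2 * n := by
  by_cases hAu : ∃ x ∈ A, ∃ x' ∈ A, x.1 ≠ x'.1 ∧ x.2 ≠ x'.2
  · obtain ⟨x, hx, x', hx', e1, e2⟩ := hAu
    exact half hn A B hP hB x x' hx hx' e1 e2
  · by_cases hBu : ∃ y ∈ B, ∃ y' ∈ B, y.1 ≠ y'.1 ∧ y.2 ≠ y'.2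
    · obtain ⟨y, hy, y', hy', e1, e2⟩ := hBu
      have := half hn B A (fun y hy x hx => (hP x hx y hy).symm) hA y y' hy hy' e1 e2
      omega
    · push_neg at hAu
      push_neg at hBu
      obtain ⟨x₀, hx₀⟩ := hA
      obtain ⟨y₀, hy₀⟩ := hB
      have hAn : A.ncard ≤ n := aligned_ncard A
        (aligned A x₀ hx₀ (fun a ha b hb => or_iff_not_imp_left.mpr (hAu a ha b hb)))
      have hBn : B.ncard ≤ n := aligned_ncard B
        (aligned B y₀ hy₀ (fun a ha b hb => or_iff_not_imp_left.mpr (hBu a ha b hb)))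
      omega

lemma isolated_reachable {V : Type*} {G : SimpleGraph V} {u v : V}
    (h : G.Reachable u v) (hu : ∀ w, ¬ G.Adj u w) : u = v := by
  obtain ⟨w⟩ := h
  cases w with
  | nil => rfl
  | cons ha _ => exact absurd ha (hu _)

lemma brandt_upper {n : ℕ} (hn : 3 ≤ n) :
    ∃ S : Set (Fin n × Fin n), S.ncard = n * (n - 2) ∧
      ¬ ((brandtGraph n).induce Sᶜ).Connected := by
  have h0 : 0 < n := by omega
  have h1 : 1 < n := by omega
  set a : Fin n := ⟨0, h0⟩ with ha_def
  set b : Fin n := ⟨1, h1⟩ with hb_def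
  set u : Fin n × Fin n := (a, b) with hu_def
  set Sfin : Finset (Fin n × Fin n) :=
    (Finset.univ.filter (fun w : Fin n × Fin n => w.1 ≠ b ∧ w.2 ≠ a)).erase u with hS_def
  refine ⟨↑Sfin, ?_, ?_⟩
  · rw [Set.ncard_coe_finset]
    have hmem : u ∈ Finset.univ.filter (fun w : Fin n × Fin n => w.1 ≠ b ∧ w.2 ≠ a) := by
      simp [u, a, b, Fin.ext_iff]
    rw [hS_def, Finset.card_erase_of_mem hmem]
    have hprod : (Finset.univ.filter (fun w : Fin n × Fin n => w.1 ≠ b ∧ w.2 ≠ a)) =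
        (Finset.univ.erase b) ×ˢ (Finset.univ.erase a) := by
      ext w
      simp only [Finset.mem_filter, Finset.mem_univ, true_and, Finset.mem_product,
        Finset.mem_erase, and_true]
    rw [hprod, Finset.card_product, Finset.card_erase_of_mem (Finset.mem_univ _),
      Finset.card_erase_of_mem (Finset.mem_univ _)]
    simp only [Finset.card_univ, Fintype.card_fin]
    obtain ⟨m, rfl⟩ : ∃ m, n = m + 3 := ⟨n - 3, by omega⟩
    have e1 : (m + 3) - 1 = m + 2 := by omega
    have e2 : (m + 3) - 2 = m + 1 := by omega
    rw [e1, e2]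
    have : (m + 2) * (m + 2) = (m + 3) * (m + 1) + 1 := by ring
    omega
  · intro hcon
    have hu : u ∈ (↑Sfin : Set (Fin n × Fin n))ᶜ := by
      simp [hS_def]
    have hv : ((b, b) : Fin n × Fin n) ∈ (↑Sfin : Set (Fin n × Fin n))ᶜ := by
      simp [hS_def]
    have hreach := hcon.preconnected ⟨u, hu⟩ ⟨(b, b), hv⟩
    have heq : (⟨u, hu⟩ : ((↑Sfin : Set (Fin n × Fin n))ᶜ : Set (Fin n × Fin n))) = ⟨(b, b), hv⟩ := by
      apply isolated_reachable hreach
      rintro ⟨w, hw⟩ hadj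
      have hadj' : (brandtGraph n).Adj u w := hadj
      rw [brandt_adj_iff] at hadj'
      obtain ⟨hne, hb1, hb2⟩ := hadj'
      apply hw
      simp only [hS_def, Finset.coe_erase, Finset.coe_filter, Finset.mem_univ, true_and,
        Set.mem_diff, Set.mem_setOf_eq]
      exact ⟨⟨fun e => hb1 e.symm, hb2⟩, by simpa using fun e => hne e.symm⟩
    have : u = (b, b) := congrArg Subtype.val heq
    rw [hu_def, Prod.ext_iff] at this
    exact absurd this.1 (by simp [ha_def, hb_def, Fin.ext_iff])

theorem brandt_vertex_connectivity (n : ℕ) (hn : 3 ≤ n) :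
    (∃ S : Set (Fin n × Fin n), S.ncard = n * (n - 2) ∧
      ¬ ((brandtGraph n).induce Sᶜ).Connected) ∧
    ∀ S : Set (Fin n × Fin n),
      ¬ ((brandtGraph n).induce Sᶜ).Connected → n * (n - 2) ≤ S.ncard := by
  refine ⟨brandt_upper hn, ?_⟩
  intro S hS
  have hcompl := Set.ncard_add_ncard_compl S
  have hcard : Nat.card (Fin n × Fin n) = n * n := by
    simp [Nat.card_eq_fintype_card]
  have harith : n * (n - 2) + 2 * n = n * n := by
    obtain ⟨m, rfl⟩ : ∃ m, n = m + 3 := ⟨n - 3, by omega⟩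
    have e2 : (m + 3) - 2 = m + 1 := by omega
    rw [e2]; ring
  have hle : Sᶜ.ncard ≤ 2 * n := by
    rcases Set.eq_empty_or_nonempty Sᶜ with he | hne
    · rw [he]; simp
    · obtain ⟨u0, hu0⟩ := hne
      have hnonempty : Nonempty (Sᶜ : Set (Fin n × Fin n)) := ⟨⟨u0, hu0⟩⟩
      have hpre : ¬ ((brandtGraph n).induce Sᶜ).Preconnected := by
        intro hp
        exact hS ((SimpleGraph.connected_iff _).mpr ⟨hp, hnonempty⟩)
      rw [SimpleGraph.Preconnected] at hpre
      push_neg at hpre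
      obtain ⟨va, vb, hab⟩ := hpre
      set G := (brandtGraph n).induce Sᶜ with hG_def
      set A : Set (Fin n × Fin n) := {x | ∃ hx : x ∈ Sᶜ, G.Reachable va ⟨x, hx⟩} with hA_def
      set B : Set (Fin n × Fin n) := Sᶜ \ A with hB_def
      have hASsub : A ⊆ Sᶜ := fun x hx => hx.1
      have haA : (va : Fin n × Fin n) ∈ A := ⟨va.2, SimpleGraph.Reachable.refl _⟩
      have hbB : (vb : Fin n × Fin n) ∈ B := by
        refine ⟨vb.2, ?_⟩
        rintro ⟨hx, hr⟩
        exact hab hr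
      have hunion : A ∪ B = Sᶜ := Set.union_diff_cancel hASsub
      have hdisj : Disjoint A B := Set.disjoint_sdiff_right
      have hcardU : A.ncard + B.ncard = Sᶜ.ncard := by
        rw [← hunion]
        exact (Set.ncard_union_eq hdisj (Set.toFinite _) (Set.toFinite _)).symm
      have hP : ∀ x ∈ A, ∀ y ∈ B, x.2 = y.1 ∨ y.2 = x.1 := by
        intro x hx y hy
        have hxy : x ≠ y := fun e => hy.2 (e ▸ hx)
        by_contra hcon
        push_neg at hcon
        have hadj : (brandtGraph n).Adj x y := (brandt_adj_iff x y).mpr ⟨hxy, hcon.1, hcon.2⟩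
        obtain ⟨hxS, hr⟩ := hx
        have hadj2 : G.Adj ⟨x, hxS⟩ ⟨y, hy.1⟩ := hadj
        exact hy.2 ⟨hy.1, hr.trans hadj2.reachable⟩
      have hkey := key hn A B ⟨va, haA⟩ ⟨vb, hbB⟩ hP
      omega
  omega
end
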